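/- Standardization intertwines the right composition of packed words with the block composition of permutations: for every packed word u of length n, every i ∈ {1,…,n}, and every packed word v, one has st(u ∘→_i v) = B_i(st(u), st(v)). -/

import Mathlib

/-- Increment by `α` every letter strictly greater than `β`. -/
def Inc (α β : ℕ) (u : List ℕ) : List ℕ := u.map fun a => if β < a then a + α else a

/-- Maximal letter of a word. -/
def maxLetter (v : List ℕ) : ℕ := v.foldr max 0

/-- A packed word whose letter set is exactly `{1, …, k}`. -/
def IsPackedOn (k : ℕ) (w : List ℕ) : Prop := w.toFinset = Finset.Icc 1 k

/-- A packed word. -/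
def IsPacked (w : List ℕ) : Prop := ∃ k, IsPackedOn k w

/-- A permutation of `{1, …, n}` identified with the word `σ(1) ⋯ σ(n)`. -/
def IsPermWord (n : ℕ) (σ : List ℕ) : Prop :=
  σ.length = n ∧ σ.toFinset = Finset.Icc 1 n

/-- `σ` is the standardization of `w`: a permutation word of `{1, …, n}` with the same
inversions as `w` (0-based indexing). -/
def IsStdOf (w σ : List ℕ) : Prop :=
  IsPermWord w.length σ ∧
    ∀ i j : ℕ, i < j → j < w.length →
      (w.getD j 0 < w.getD i 0 ↔ σ.getD j 0 < σ.getD i 0)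

/-- The weakly increasing rearrangement (composition type) of a word. -/
def chi (w : List ℕ) : List ℕ := List.insertionSort (· ≤ ·) w

/-- Right composition `u ∘→_i v` of packed words (`i` is 1-based). -/
def rightComp (u : List ℕ) (i : ℕ) (v : List ℕ) : List ℕ :=
  Inc (maxLetter v - 1) (u.getD (i - 1) 0) (u.take (i - 1))
    ++ Inc (u.getD (i - 1) 0 - 1) 0 v
    ++ Inc (maxLetter v - 1) (u.getD (i - 1) 0 - 1) (u.drop i)

/-- Left composition `u ∘←_i v` of packed words: replace in `Inc (m-1) i u` every
occurrence of the letter `i` by the word `Inc (i-1) 0 v`, where `m` is the maximal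
letter of `v`. -/
def leftComp (u : List ℕ) (i : ℕ) (v : List ℕ) : List ℕ :=
  u.flatMap fun a =>
    if a = i then Inc (i - 1) 0 v else [if i < a then a + (maxLetter v - 1) else a]

/-- Block composition `B_i(α, β)` of permutation words (`i` is 1-based, `β` a permutation
of `{1, …, m}` with `m = β.length`). -/
def blockComp (α : List ℕ) (i : ℕ) (β : List ℕ) : List ℕ :=
  Inc (β.length - 1) (α.getD (i - 1) 0) (α.take (i - 1))
    ++ Inc (α.getD (i - 1) 0 - 1) 0 β
    ++ Inc (β.length - 1) (α.getD (i - 1) 0 - 1) (α.drop i)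

/-- The inverse of a permutation word. -/
def invWord (σ : List ℕ) : List ℕ :=
  (List.range σ.length).map fun p => σ.idxOf (p + 1) + 1

/-- The right action of a permutation word `σ` of `{1, …, n}` on a packed word with
letter set `{1, …, n}`: the `p`-th letter of `u · σ` is `σ⁻¹(u(p))`. -/
def permAct (u σ : List ℕ) : List ℕ := u.map fun a => (invWord σ).getD (a - 1) 0

/-- The identity permutation word of `{1, …, m}`. -/
def idWord (m : ℕ) : List ℕ := (List.range m).map (· + 1)

/-- `First k u`: keep only the `k` leftmost occurrences of each letter of `u`. -/
def First (k : ℕ) (u : List ℕ) : List ℕ :=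
  (List.range u.length).filterMap fun p =>
    if (u.take p).count (u.getD p 0) < k then some (u.getD p 0) else none


lemma Inc_length (α β : ℕ) (w : List ℕ) : (Inc α β w).length = w.length := by
  simp [Inc]

lemma Inc_getD (α β : ℕ) (w : List ℕ) {p : ℕ} (hp : p < w.length) :
    (Inc α β w).getD p 0
      = if β < w.getD p 0 then w.getD p 0 + α else w.getD p 0 := by
  unfold Inc
  rw [List.getD_eq_getElem _ _ (by simpa using hp), List.getElem_map,
    List.getD_eq_getElem _ _ hp]

lemma le_maxLetter {x : ℕ} {v : List ℕ} (h : x ∈ v) : x ≤ maxLetter v := by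
  induction v with
  | nil => simp at h
  | cons y l ih =>
    rcases List.mem_cons.mp h with rfl | h
    · exact le_max_left _ _
    · exact (ih h).trans (le_max_right _ _)

lemma nodup_of_perm {n : ℕ} {σ : List ℕ} (h : IsPermWord n σ) : σ.Nodup := by
  obtain ⟨hlen, hset⟩ := h
  rw [← List.dedup_eq_self]
  apply (List.dedup_sublist σ).eq_of_length
  have h2 : σ.toFinset.card = σ.dedup.length := List.card_toFinset σ
  rw [hset, Nat.card_Icc] at h2
  omega

lemma perm_getD_inj {n : ℕ} {σ : List ℕ} (h : IsPermWord n σ) {q q' : ℕ}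
    (hq : q < n) (hq' : q' < n) (he : σ.getD q 0 = σ.getD q' 0) : q = q' := by
  have hnd := nodup_of_perm h
  have hlen := h.1
  have hq1 : q < σ.length := by omega
  have hq2 : q' < σ.length := by omega
  rw [List.getD_eq_getElem _ _ hq1, List.getD_eq_getElem _ _ hq2] at he
  exact hnd.getElem_inj_iff.mp he

lemma perm_getD_mem {n : ℕ} {σ : List ℕ} (h : IsPermWord n σ) {q : ℕ} (hq : q < n) :
    1 ≤ σ.getD q 0 ∧ σ.getD q 0 ≤ n := by
  have hlen := h.1
  have hq1 : q < σ.length := by omega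
  have : σ.getD q 0 ∈ σ.toFinset := by
    rw [List.mem_toFinset, List.getD_eq_getElem _ _ hq1]
    exact List.getElem_mem _
  rw [h.2, Finset.mem_Icc] at this
  exact this

lemma perm_rank {n : ℕ} {σ : List ℕ} (h : IsPermWord n σ) {p : ℕ} (hp : p < n) :
    σ.getD p 0
      = (Finset.filter (fun q => σ.getD q 0 < σ.getD p 0) (Finset.range n)).card + 1 := by
  have himg : (Finset.filter (fun q => σ.getD q 0 < σ.getD p 0) (Finset.range n)).image
      (fun q => σ.getD q 0) = Finset.Ico 1 (σ.getD p 0) := by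
    ext y
    simp only [Finset.mem_image, Finset.mem_filter, Finset.mem_range, Finset.mem_Ico]
    constructor
    · rintro ⟨q, ⟨hq, hlt⟩, rfl⟩
      exact ⟨(perm_getD_mem h hq).1, hlt⟩
    · rintro ⟨hy1, hy2⟩
      have hyn : y ∈ σ.toFinset := by
        rw [h.2, Finset.mem_Icc]
        have := (perm_getD_mem h hp).2
        omega
      rw [List.mem_toFinset, List.mem_iff_getElem] at hyn
      obtain ⟨q, hq, hval⟩ := hyn
      have hq' : q < n := by rw [← h.1]; exact hq
      have : σ.getD q 0 = y := by rw [List.getD_eq_getElem _ _ hq, hval]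
      exact ⟨q, ⟨hq', by omega⟩, this⟩
  have hinj : Set.InjOn (fun q => σ.getD q 0)
      ↑(Finset.filter (fun q => σ.getD q 0 < σ.getD p 0) (Finset.range n)) := by
    intro q hq q' hq' he
    simp only [Finset.coe_filter, Set.mem_setOf_eq, Finset.mem_range] at hq hq'
    exact perm_getD_inj h hq.1 hq'.1 he
  have hcard := Finset.card_image_of_injOn hinj
  rw [himg, Nat.card_Ico] at hcard
  have := (perm_getD_mem h hp).1
  omega

lemma std_unique {w σ1 σ2 : List ℕ} (h1 : IsStdOf w σ1) (h2 : IsStdOf w σ2) :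
    σ1 = σ2 := by
  obtain ⟨hp1, hc1⟩ := h1
  obtain ⟨hp2, hc2⟩ := h2
  have key : ∀ p, p < w.length → σ1.getD p 0 = σ2.getD p 0 := by
    intro p hp
    rw [perm_rank hp1 hp, perm_rank hp2 hp]
    have hfe : Finset.filter (fun q => σ1.getD q 0 < σ1.getD p 0) (Finset.range w.length)
        = Finset.filter (fun q => σ2.getD q 0 < σ2.getD p 0) (Finset.range w.length) := by
      apply Finset.filter_congr
      intro q hq
      rw [Finset.mem_range] at hq
      rcases lt_trichotomy q p with hlt | rfl | hgt
      · have i1 := hc1 q p hlt hp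
        have i2 := hc2 q p hlt hp
        have ne1 : σ1.getD q 0 ≠ σ1.getD p 0 := fun he => by
          have := perm_getD_inj hp1 hq hp he; omega
        have ne2 : σ2.getD q 0 ≠ σ2.getD p 0 := fun he => by
          have := perm_getD_inj hp2 hq hp he; omega
        constructor
        · intro hlt1
          have h1' : ¬ σ1.getD p 0 < σ1.getD q 0 := by omega
          have hw : ¬ w.getD p 0 < w.getD q 0 := fun hw => h1' (i1.mp hw)
          have h2' : ¬ σ2.getD p 0 < σ2.getD q 0 := fun hs => hw (i2.mpr hs)
          omega
        · intro hlt2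
          have h2' : ¬ σ2.getD p 0 < σ2.getD q 0 := by omega
          have hw : ¬ w.getD p 0 < w.getD q 0 := fun hw => h2' (i2.mp hw)
          have h1' : ¬ σ1.getD p 0 < σ1.getD q 0 := fun hs => hw (i1.mpr hs)
          omega
      · omega
      · exact ((hc1 p q hgt hq).symm.trans (hc2 p q hgt hq))
    rw [hfe]
  apply List.ext_getElem (by rw [hp1.1, hp2.1])
  intro k hk1 hk2
  have hk : k < w.length := by rw [← hp1.1]; exact hk1
  have := key k hk
  rwa [List.getD_eq_getElem _ _ hk1, List.getD_eq_getElem _ _ hk2] at this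
lemma comp_length (w z : List ℕ) (i c t : ℕ) (hi1 : 1 ≤ i) (hin : i ≤ w.length) :
    (Inc c t (w.take (i-1)) ++ Inc (t-1) 0 z ++ Inc c (t-1) (w.drop i)).length
      = w.length + z.length - 1 := by
  simp only [List.length_append, Inc_length, List.length_take, List.length_drop]
  omega

lemma comp_getD_lt (w z : List ℕ) (i c t : ℕ) {j : ℕ} (hj : j < i-1)
    (hin : i - 1 ≤ w.length) :
    (Inc c t (w.take (i-1)) ++ Inc (t-1) 0 z ++ Inc c (t-1) (w.drop i)).getD j 0
      = if t < w.getD j 0 then w.getD j 0 + c else w.getD j 0 := by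
  rw [List.append_assoc]
  rw [List.getD_append _ _ _ _ (by rw [Inc_length, List.length_take]; omega)]
  have hjt : j < (w.take (i-1)).length := by rw [List.length_take]; omega
  rw [Inc_getD _ _ _ hjt]
  have hjw : j < w.length := by omega
  have he : (w.take (i-1)).getD j 0 = w.getD j 0 := by
    rw [List.getD_eq_getElem _ _ hjt, List.getD_eq_getElem _ _ hjw, List.getElem_take]
  rw [he]

lemma comp_getD_mid (w z : List ℕ) (i c t : ℕ) {j : ℕ} (hj1 : i-1 ≤ j)
    (hj2 : j < i-1 + z.length) (hin : i - 1 ≤ w.length) :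
    (Inc c t (w.take (i-1)) ++ Inc (t-1) 0 z ++ Inc c (t-1) (w.drop i)).getD j 0
      = if 0 < z.getD (j-(i-1)) 0 then z.getD (j-(i-1)) 0 + (t-1)
        else z.getD (j-(i-1)) 0 := by
  rw [List.append_assoc]
  rw [List.getD_append_right _ _ _ _ (by rw [Inc_length, List.length_take]; omega)]
  have hlen1 : (Inc c t (w.take (i-1))).length = i - 1 := by
    rw [Inc_length, List.length_take]; omega
  rw [hlen1]
  rw [List.getD_append _ _ _ _ (by rw [Inc_length]; omega)]
  exact Inc_getD _ _ _ (by omega)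

lemma comp_getD_hi (w z : List ℕ) (i c t : ℕ) {j : ℕ} (hj1 : i-1 + z.length ≤ j)
    (hj2 : j < w.length + z.length - 1) (hi1 : 1 ≤ i) (hin : i ≤ w.length) :
    (Inc c t (w.take (i-1)) ++ Inc (t-1) 0 z ++ Inc c (t-1) (w.drop i)).getD j 0
      = if t-1 < w.getD (j - z.length + 1) 0 then w.getD (j - z.length + 1) 0 + c
        else w.getD (j - z.length + 1) 0 := by
  rw [List.append_assoc]
  rw [List.getD_append_right _ _ _ _ (by rw [Inc_length, List.length_take]; omega)]
  have hlen1 : (Inc c t (w.take (i-1))).length = i - 1 := by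
    rw [Inc_length, List.length_take]; omega
  rw [hlen1]
  rw [List.getD_append_right _ _ _ _ (by rw [Inc_length]; omega)]
  rw [Inc_length]
  have hk : j - (i-1) - z.length < (w.drop i).length := by
    rw [List.length_drop]; omega
  rw [Inc_getD _ _ _ hk]
  have hkw : i + (j - (i-1) - z.length) < w.length := by omega
  have he : (w.drop i).getD (j - (i-1) - z.length) 0 = w.getD (j - z.length + 1) 0 := by
    have hjw : j - z.length + 1 < w.length := by omega
    rw [List.getD_eq_getElem _ _ hk, List.getElem_drop,
      List.getD_eq_getElem _ _ hjw]
    simp only [show i + (j - (i-1) - z.length) = j - z.length + 1 from by omega]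
  rw [he]

lemma inc_lt_iff {α β x y : ℕ} :
    ((if β < x then x + α else x) < (if β < y then y + α else y)) ↔ x < y := by
  split_ifs <;> omega

lemma cross_AB {a s x y : ℕ} (ha : 1 ≤ a) (hy1 : 1 ≤ y) (hys : y ≤ s) :
    ((if 0 < y then y + (a-1) else y) < (if a < x then x + (s-1) else x)) ↔ a < x := by
  split_ifs <;> omega

lemma cross_AC {a s x y : ℕ} (hs : 1 ≤ s) (ha : 1 ≤ a) :
    ((if a-1 < x then x + (s-1) else x) < (if a < y then y + (s-1) else y)) ↔ x < y := by
  split_ifs <;> omega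

lemma cross_BB {c y y' : ℕ} :
    ((if 0 < y then y + c else y) < (if 0 < y' then y' + c else y')) ↔ y < y' := by
  split_ifs <;> omega

lemma cross_BC {a s x y : ℕ} (ha : 1 ≤ a) (hy1 : 1 ≤ y) (hys : y ≤ s) :
    ((if a-1 < x then x + (s-1) else x) < (if 0 < y then y + (a-1) else y)) ↔ x < a := by
  split_ifs <;> omega
lemma blockComp_toFinset {n m : ℕ} {σ τ : List ℕ} (hσ : IsPermWord n σ)
    (hτ : IsPermWord m τ) {i : ℕ} (hi1 : 1 ≤ i) (hin : i ≤ n) (hm : 1 ≤ m) :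
    (blockComp σ i τ).toFinset = Finset.Icc 1 (n + m - 1) := by
  have hσl := hσ.1
  have hτl := hτ.1
  have hb := perm_getD_mem hσ (show i - 1 < n by omega)
  have hidx : i - 1 < σ.length := by omega
  have hb2 : σ.getD (i-1) 0 = σ[i-1] := List.getD_eq_getElem σ 0 hidx
  have hσmem : ∀ y ∈ σ, 1 ≤ y ∧ y ≤ n := by
    intro y hy
    have := List.mem_toFinset.mpr hy
    rw [hσ.2, Finset.mem_Icc] at this
    exact this
  have hτmem : ∀ y ∈ τ, 1 ≤ y ∧ y ≤ m := by
    intro y hy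
    have := List.mem_toFinset.mpr hy
    rw [hτ.2, Finset.mem_Icc] at this
    exact this
  have hmemσ : ∀ y : ℕ, y ∈ σ ↔ y ∈ σ.take (i-1) ∨ y = σ.getD (i-1) 0 ∨ y ∈ σ.drop i := by
    intro y
    have hdrop : σ.drop (i-1) = σ[i-1] :: σ.drop i := by
      have hii : i - 1 + 1 = i := by omega
      rw [List.drop_eq_getElem_cons hidx, hii]
    conv_lhs => rw [← List.take_append_drop (i-1) σ, hdrop]
    rw [List.mem_append, List.mem_cons, hb2]
  ext x
  rw [List.mem_toFinset, Finset.mem_Icc]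
  simp only [blockComp, List.mem_append, Inc, List.mem_map]
  constructor
  · rintro ((⟨y, hy, rfl⟩ | ⟨y, hy, rfl⟩) | ⟨y, hy, rfl⟩)
    · have := hσmem y (List.mem_of_mem_take hy)
      split_ifs <;> omega
    · have := hτmem y hy
      split_ifs <;> omega
    · have := hσmem y (List.mem_of_mem_drop hy)
      split_ifs <;> omega
  · rintro ⟨hx1, hx2⟩
    by_cases hcb : x < σ.getD (i-1) 0
    · have hxσ : x ∈ σ := by
        rw [← List.mem_toFinset, hσ.2, Finset.mem_Icc]
        omega
      rw [hmemσ] at hxσ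
      rcases hxσ with h | h | h
      · exact Or.inl (Or.inl ⟨x, h, by rw [if_neg (by omega)]⟩)
      · omega
      · exact Or.inr ⟨x, h, by rw [if_neg (by omega)]⟩
    · by_cases hcm : x < σ.getD (i-1) 0 + m
      · refine Or.inl (Or.inr ⟨x - σ.getD (i-1) 0 + 1, ?_, ?_⟩)
        · rw [← List.mem_toFinset, hτ.2, Finset.mem_Icc]
          omega
        · rw [if_pos (by omega)]
          omega
      · have hxσ : x - m + 1 ∈ σ := by
          rw [← List.mem_toFinset, hσ.2, Finset.mem_Icc]
          omega
        rw [hmemσ] at hxσ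
        rcases hxσ with h | h | h
        · refine Or.inl (Or.inl ⟨x - m + 1, h, ?_⟩)
          rw [if_pos (by omega)]
          omega
        · omega
        · refine Or.inr ⟨x - m + 1, h, ?_⟩
          rw [if_pos (by omega)]
          omega
/-- Standardization intertwines the right composition of packed words with the block
composition of permutations: `st(u ∘→_i v) = B_i(st(u), st(v))`. -/
theorem std_rightComp_eq_blockComp (u v σ τ ρ : List ℕ)
    (hu : IsPacked u) (hv : IsPacked v) (i : ℕ)
    (hi : i ∈ Finset.Icc 1 u.length) (hv1 : 1 ≤ v.length)
    (hσ : IsStdOf u σ) (hτ : IsStdOf v τ) (hρ : IsStdOf (rightComp u i v) ρ) :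
    ρ = blockComp σ i τ := by
  obtain ⟨hi1, hin⟩ := Finset.mem_Icc.mp hi
  obtain ⟨ku, hku⟩ := hu
  obtain ⟨kv, hkv⟩ := hv
  obtain ⟨⟨hσl, hσs⟩, hσc⟩ := hσ
  obtain ⟨⟨hτl, hτs⟩, hτc⟩ := hτ
  have hn1 : 1 ≤ u.length := le_trans hi1 hin
  have humem : ∀ p, p < u.length → 1 ≤ u.getD p 0 := by
    intro p hp
    have hmem : u.getD p 0 ∈ u := by
      rw [List.getD_eq_getElem _ _ hp]; exact List.getElem_mem _
    have := List.mem_toFinset.mpr hmem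
    rw [hku, Finset.mem_Icc] at this
    omega
  have hvmem : ∀ p, p < v.length → 1 ≤ v.getD p 0 ∧ v.getD p 0 ≤ maxLetter v := by
    intro p hp
    have hmem : v.getD p 0 ∈ v := by
      rw [List.getD_eq_getElem _ _ hp]; exact List.getElem_mem _
    have h1 := List.mem_toFinset.mpr hmem
    rw [hkv, Finset.mem_Icc] at h1
    exact ⟨h1.1, le_maxLetter hmem⟩
  have hτmem : ∀ p, p < v.length → 1 ≤ τ.getD p 0 ∧ τ.getD p 0 ≤ v.length :=
    fun p hp => perm_getD_mem ⟨hτl, hτs⟩ hp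
  have ha1 : 1 ≤ u.getD (i-1) 0 := humem (i-1) (by omega)
  have hs1 : 1 ≤ maxLetter v :=
    le_trans (hvmem 0 (by omega)).1 (hvmem 0 (by omega)).2
  have hb : 1 ≤ σ.getD (i-1) 0 ∧ σ.getD (i-1) 0 ≤ u.length :=
    perm_getD_mem ⟨hσl, hσs⟩ (by omega)
  have hm1 : 1 ≤ τ.length := by omega
  have hRlen : (rightComp u i v).length = u.length + v.length - 1 := by
    unfold rightComp
    exact comp_length u v i _ _ hi1 hin
  have hLlen : (blockComp σ i τ).length = u.length + v.length - 1 := by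
    unfold blockComp
    rw [comp_length σ τ i _ _ hi1 (by omega)]
    omega
  have key : IsStdOf (rightComp u i v) (blockComp σ i τ) := by
    refine ⟨⟨by rw [hRlen, hLlen], ?_⟩, ?_⟩
    · rw [hRlen]
      exact blockComp_toFinset ⟨hσl, hσs⟩ ⟨hτl, hτs⟩ hi1 hin hv1
    · intro j1 j2 hj12 hj2
      rw [hRlen] at hj2
      unfold rightComp blockComp
      by_cases c1 : j2 < i - 1
      · rw [comp_getD_lt u v i _ _ (j := j2) c1 (by omega),
            comp_getD_lt u v i _ _ (j := j1) (show j1 < i-1 by omega) (by omega),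
            comp_getD_lt σ τ i _ _ (j := j2) c1 (by omega),
            comp_getD_lt σ τ i _ _ (j := j1) (show j1 < i-1 by omega) (by omega),
            inc_lt_iff, inc_lt_iff]
        exact hσc j1 j2 hj12 (by omega)
      · by_cases c2 : j2 < i - 1 + v.length
        · by_cases c3 : j1 < i - 1
          · -- A , B
            rw [comp_getD_mid u v i _ _ (j := j2) (by omega) c2 (by omega),
                comp_getD_lt u v i _ _ (j := j1) c3 (by omega),
                comp_getD_mid σ τ i _ _ (j := j2) (by omega) (by omega) (by omega),
                comp_getD_lt σ τ i _ _ (j := j1) c3 (by omega)]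
            rw [cross_AB ha1 (hvmem (j2-(i-1)) (by omega)).1 (hvmem (j2-(i-1)) (by omega)).2,
                cross_AB hb.1 (hτmem (j2-(i-1)) (by omega)).1
                  (by have := (hτmem (j2-(i-1)) (by omega)).2; omega)]
            exact hσc j1 (i-1) (by omega) (by omega)
          · -- B , B
            rw [comp_getD_mid u v i _ _ (j := j2) (by omega) c2 (by omega),
                comp_getD_mid u v i _ _ (j := j1) (by omega) (by omega) (by omega),
                comp_getD_mid σ τ i _ _ (j := j2) (by omega) (by omega) (by omega),
                comp_getD_mid σ τ i _ _ (j := j1) (by omega) (by omega) (by omega),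
                cross_BB, cross_BB]
            exact hτc (j1-(i-1)) (j2-(i-1)) (by omega) (by omega)
        · by_cases c3 : j1 < i - 1
          · -- A , C
            rw [comp_getD_hi u v i _ _ (j := j2) (by omega) (by omega) hi1 hin,
                comp_getD_lt u v i _ _ (j := j1) c3 (by omega),
                comp_getD_hi σ τ i _ _ (j := j2) (by omega) (by omega) hi1 (by omega),
                comp_getD_lt σ τ i _ _ (j := j1) c3 (by omega),
                hτl]
            rw [cross_AC hs1 ha1, cross_AC hv1 hb.1]
            exact hσc j1 (j2 - v.length + 1) (by omega) (by omega)
          · by_cases c4 : j1 < i - 1 + v.length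
            · -- B , C
              rw [comp_getD_hi u v i _ _ (j := j2) (by omega) (by omega) hi1 hin,
                  comp_getD_mid u v i _ _ (j := j1) (by omega) (by omega) (by omega),
                  comp_getD_hi σ τ i _ _ (j := j2) (by omega) (by omega) hi1 (by omega),
                  comp_getD_mid σ τ i _ _ (j := j1) (by omega) (by omega) (by omega),
                  hτl]
              rw [cross_BC ha1 (hvmem (j1-(i-1)) (by omega)).1 (hvmem (j1-(i-1)) (by omega)).2,
                  cross_BC hb.1 (hτmem (j1-(i-1)) (by omega)).1
                    (by have := (hτmem (j1-(i-1)) (by omega)).2; omega)]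
              exact hσc (i-1) (j2 - v.length + 1) (by omega) (by omega)
            · -- C , C
              rw [comp_getD_hi u v i _ _ (j := j2) (by omega) (by omega) hi1 hin,
                  comp_getD_hi u v i _ _ (j := j1) (show i-1+v.length ≤ j1 by omega) (by omega) hi1 hin,
                  comp_getD_hi σ τ i _ _ (j := j2) (by omega) (by omega) hi1 (by omega),
                  comp_getD_hi σ τ i _ _ (j := j1) (show i-1+τ.length ≤ j1 by omega) (by omega) hi1 (by omega),
                  hτl, inc_lt_iff, inc_lt_iff]
              exact hσc (j1 - v.length + 1) (j2 - v.length + 1) (by omega) (by omega)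
  exact std_unique hρ key
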